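/- Let {θ_j} be dense in [0,2π] and a_j := (1+1/j)e^{iθ_j}. Let U ⊂ ℂ be an open neighborhood of 𝔻̄ and let v be a C¹-smooth subharmonic function on U. If v(a_j) = 1 for every j with a_j ∈ U, then v ≡ 1 on the closed unit disc 𝔻̄. -/

import Mathlib

open Complex Metric MeasureTheory Real Set

/-- The average of `f` over the circle of radius `r` centered at `z`. -/
noncomputable def cAvg (f : ℂ → ℝ) (z : ℂ) (r : ℝ) : ℝ :=
  (2 * Real.pi)⁻¹ * ∫ θ in (0:ℝ)..(2 * Real.pi), f (z + (r : ℂ) * Complex.exp (θ * Complex.I))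

/-- Sub-mean value property of `f` at `z` with respect to circles whose closed discs lie in `U`. -/
def SubmeanAt (f : ℂ → ℝ) (U : Set ℂ) (z : ℂ) : Prop :=
  ∀ r : ℝ, 0 < r → closedBall z r ⊆ U → f z ≤ cAvg f z r

/-- A real-valued function is subharmonic on `U` if it is upper semicontinuous on `U` and
satisfies the sub-mean value inequality there. -/
def SubharmonicOn (f : ℂ → ℝ) (U : Set ℂ) : Prop :=
  UpperSemicontinuousOn f U ∧ ∀ z ∈ U, SubmeanAt f U z

/-- A `[-∞,∞)`-valued function is subharmonic on `U` if it is upper semicontinuous on `U`,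
nowhere `+∞`, not identically `-∞`, and all of its truncations `max (f ·) (-n)` satisfy the
sub-mean value inequality on `U`. -/
def SubharmonicOnE (f : ℂ → EReal) (U : Set ℂ) : Prop :=
  UpperSemicontinuousOn f U ∧ (∀ z ∈ U, f z < ⊤) ∧ (∃ z ∈ U, f z ≠ ⊥) ∧
  ∀ n : ℕ, ∀ z ∈ U, SubmeanAt (fun w => (max (f w) ((-(n:ℝ) : ℝ) : EReal)).toReal) U z

/-- A real-valued function on a complex normed space is plurisubharmonic on `U` if it is upper
semicontinuous on `U` and satisfies the sub-mean value inequality along every complex line. -/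
def PshOn {E : Type*} [NormedAddCommGroup E] [NormedSpace ℂ E]
    (f : E → ℝ) (U : Set E) : Prop :=
  UpperSemicontinuousOn f U ∧
  ∀ z ∈ U, ∀ v : E, ∀ r : ℝ, 0 < r → (∀ t : ℂ, ‖t‖ ≤ r → z + t • v ∈ U) →
    f z ≤ (2 * Real.pi)⁻¹ *
      ∫ θ in (0:ℝ)..(2 * Real.pi), f (z + ((r : ℂ) * Complex.exp (θ * Complex.I)) • v)

/-- Strict plurisubharmonicity on `U` (in the sense of Harz–Shcherbina–Tomassini): every small
perturbation by a smooth compactly supported function stays plurisubharmonic. -/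
def StrictPshOn {E : Type*} [NormedAddCommGroup E] [NormedSpace ℝ E] [NormedSpace ℂ E]
    (f : E → ℝ) (U : Set E) : Prop :=
  ∀ g : E → ℝ, ContDiff ℝ (⊤ : ℕ∞) g → HasCompactSupport g → tsupport g ⊆ U →
    ∃ ε₀ : ℝ, 0 < ε₀ ∧ ∀ ε : ℝ, |ε| < ε₀ → PshOn (fun z => f z + ε * g z) U

/-- `f` is strictly plurisubharmonic near `z`. -/
def StrictPshNear {E : Type*} [NormedAddCommGroup E] [NormedSpace ℝ E] [NormedSpace ℂ E]
    (f : E → ℝ) (z : E) : Prop :=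
  ∃ V : Set E, IsOpen V ∧ z ∈ V ∧ StrictPshOn f V

/-- The core of `Ω` with respect to `C^k`-smooth plurisubharmonic functions that are bounded
from above. -/
def pshCore {E : Type*} [NormedAddCommGroup E] [NormedSpace ℝ E] [NormedSpace ℂ E]
    (k : ℕ∞) (Ω : Set E) : Set E :=
  {z ∈ Ω | ∀ f : E → ℝ, PshOn f Ω → ContDiffOn ℝ k f Ω →
     (∃ M : ℝ, ∀ w ∈ Ω, f w ≤ M) → ¬ StrictPshNear f z}

/-- `Ω` is pseudoconvex: it is open and admits a plurisubharmonic exhaustion function. -/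
def Pseudoconvex {E : Type*} [NormedAddCommGroup E] [NormedSpace ℂ E] (Ω : Set E) : Prop :=
  IsOpen Ω ∧ ∃ f : E → ℝ, PshOn f Ω ∧
    ∀ c : ℝ, ∃ K : Set E, IsCompact K ∧ K ⊆ Ω ∧ {z ∈ Ω | f z ≤ c} ⊆ K

/-- The Levi form (complex Hessian) of `S` at `z` in direction `ξ`, computed as one quarter of
the Laplacian at `t = 0` of `t ↦ S (z + t • ξ)`. -/
noncomputable def leviForm {E : Type*} [NormedAddCommGroup E] [NormedSpace ℂ E]
    (S : E → ℝ) (z ξ : E) : ℝ :=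
  (1/4) * (deriv (fun x : ℝ => deriv (fun x' : ℝ => S (z + ((x' : ℂ)) • ξ)) x) 0
    + deriv (fun y : ℝ => deriv (fun y' : ℝ => S (z + ((y' : ℂ) * Complex.I) • ξ)) y) 0)

theorem holo_mvp {c : ℂ} {R : ℝ} {f : ℂ → ℂ} (hR : 0 < R)
    (hf : DifferentiableOn ℂ f (closedBall c R)) :
    (∫ θ in (0:ℝ)..(2*Real.pi), f (c + R * Complex.exp (θ * Complex.I))) = 2 * Real.pi * f c := by
  have hd : DiffContOnCl ℂ f (ball c R) := by
    refine DifferentiableOn.diffContOnCl ?_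
    rwa [closure_ball c hR.ne']
  have h := hd.circleIntegral_sub_inv_smul (mem_ball_self hR)
  rw [circleIntegral] at h
  simp only [deriv_circleMap, circleMap, circleMap_zero, smul_eq_mul, zero_add] at h
  have h2 : ∀ θ : ℝ, ((R:ℂ) * Complex.exp (θ * Complex.I) * Complex.I) *
      (((c + R * Complex.exp (θ * Complex.I)) - c)⁻¹ * f (c + R * Complex.exp (θ * Complex.I)))
      = Complex.I * f (c + R * Complex.exp (θ * Complex.I)) := by
    intro θ
    have hne : (R:ℂ) * Complex.exp (θ * Complex.I) ≠ 0 :=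
      mul_ne_zero (by exact_mod_cast hR.ne') (Complex.exp_ne_zero _)
    rw [add_sub_cancel_left]
    calc _ = Complex.I * (((R:ℂ) * Complex.exp (θ * Complex.I)) * ((R:ℂ) * Complex.exp (θ * Complex.I))⁻¹) * f (c + R * Complex.exp (θ * Complex.I)) := by ring
      _ = _ := by rw [mul_inv_cancel₀ hne, mul_one]
  rw [intervalIntegral.integral_congr (g := fun θ => Complex.I * f (c + R * Complex.exp (θ * Complex.I))) (fun θ _ => h2 θ)] at h
  rw [intervalIntegral.integral_const_mul] at h
  have h3 : (2 * (π:ℂ) * Complex.I * f c) = Complex.I * (2 * π * f c) := by ring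
  rw [h3] at h
  exact mul_left_cancel₀ Complex.I_ne_zero h

theorem circle_abs {z : ℂ} {r : ℝ} (hr : 0 < r) (θ : ℝ) (hrz : r < ‖z‖) :
    ‖z‖ - r ≤ ‖z + r * Complex.exp (θ * Complex.I)‖ ∧
    (0:ℝ) < ‖z + r * Complex.exp (θ * Complex.I)‖ := by
  have h3 : ‖(r:ℂ) * Complex.exp (θ * Complex.I)‖ = r := by
    simp [Complex.norm_exp, abs_of_pos hr]
  have htri := norm_add_le (z + r * Complex.exp (θ * Complex.I)) (-(r * Complex.exp (θ * Complex.I)))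
  simp only [add_neg_cancel_right, map_neg, norm_neg, h3] at htri
  constructor <;> linarith

theorem log_mvp {z : ℂ} {r : ℝ} (hr : 0 < r) (hrz : r < ‖z‖) :
    (∫ θ in (0:ℝ)..(2*Real.pi), Real.log (‖z + r * Complex.exp (θ * Complex.I)‖))
      = 2 * Real.pi * Real.log (‖z‖) := by
  have hz : z ≠ 0 := by
    intro h; rw [h] at hrz; simp at hrz; linarith
  have habsz : 0 < ‖z‖ := norm_pos_iff.mpr hz
  set f : ℂ → ℂ := fun ζ => Complex.log (ζ / z) with hf
  have hdiff : DifferentiableOn ℂ f (closedBall z r) := by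
    intro ζ hζ
    have h1 : ‖ζ / z - 1‖ < 1 := by
      rw [show ζ / z - 1 = (ζ - z) / z by field_simp]
      rw [norm_div, div_lt_one habsz]
      calc ‖ζ - z‖ ≤ r := by
            rw [mem_closedBall, Complex.dist_eq] at hζ; exact hζ
        _ < ‖z‖ := hrz
    have hmem : ζ / z ∈ Complex.slitPlane := by
      left
      have h2 : |(ζ/z).re - 1| < 1 := by
        calc |(ζ/z).re - 1| = |(ζ/z - 1).re| := by rw [Complex.sub_re, Complex.one_re]
          _ ≤ ‖ζ/z - 1‖ := Complex.abs_re_le_norm _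
          _ < 1 := h1
      linarith [(abs_lt.mp h2).1]
    exact ((Complex.differentiableAt_log hmem).comp ζ
      (differentiableAt_id.div_const z)).differentiableWithinAt
  have h := holo_mvp hr hdiff
  have hfz : f z = 0 := by simp [hf, div_self hz]
  rw [hfz, mul_zero] at h
  have hmaps : ∀ θ : ℝ, z + r * Complex.exp (θ * Complex.I) ∈ closedBall z r := by
    intro θ
    simp [Complex.dist_eq, Complex.norm_exp, abs_of_pos hr]
  have hcmap : Continuous fun θ : ℝ => z + (r:ℂ) * Complex.exp (θ * Complex.I) := by
    continuity
  have hint : IntervalIntegrable (fun θ : ℝ => f (z + r * Complex.exp (θ * Complex.I)))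
      MeasureTheory.volume 0 (2*Real.pi) := by
    apply ContinuousOn.intervalIntegrable
    exact (hdiff.continuousOn.comp hcmap.continuousOn (fun θ _ => hmaps θ))
  have hre := Complex.reCLM.intervalIntegral_comp_comm hint
  rw [h] at hre
  simp only [Complex.reCLM_apply, Complex.zero_re] at hre
  have hptre : ∀ θ : ℝ, (f (z + r * Complex.exp (θ * Complex.I))).re
      = Real.log (‖z + r * Complex.exp (θ * Complex.I)‖) - Real.log (‖z‖) := by
    intro θ
    rw [hf]
    simp only [Complex.log_re, norm_div]
    rw [Real.log_div (circle_abs hr θ hrz).2.ne' habsz.ne']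
  rw [intervalIntegral.integral_congr (g := fun θ =>
    Real.log (‖z + r * Complex.exp (θ * Complex.I)‖) - Real.log (‖z‖))
    (fun θ _ => hptre θ)] at hre
  have hint2 : IntervalIntegrable (fun θ : ℝ =>
      Real.log (‖z + r * Complex.exp (θ * Complex.I)‖))
      MeasureTheory.volume 0 (2*Real.pi) := by
    apply ContinuousOn.intervalIntegrable
    apply Real.continuousOn_log.comp (continuous_norm.comp hcmap).continuousOn
    intro θ _
    exact (circle_abs hr θ hrz).2.ne'
  rw [intervalIntegral.integral_sub hint2 intervalIntegrable_const,
    intervalIntegral.integral_const, sub_eq_zero] at hre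
  rw [hre]
  simp



theorem cAvg_le {f : ℂ → ℝ} {z : ℂ} {r M : ℝ}
    (hcont : Continuous (fun θ : ℝ => f (z + (r:ℂ) * Complex.exp (θ * Complex.I))))
    (hle : ∀ θ : ℝ, f (z + (r:ℂ) * Complex.exp (θ * Complex.I)) ≤ M) :
    cAvg f z r ≤ M := by
  have h2π : (0:ℝ) < 2 * Real.pi := by positivity
  have hint : IntervalIntegrable (fun θ : ℝ => f (z + (r:ℂ) * Complex.exp (θ * Complex.I)))
      MeasureTheory.volume 0 (2*Real.pi) := hcont.intervalIntegrable _ _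
  have h1 : (∫ θ in (0:ℝ)..(2*Real.pi), f (z + (r:ℂ) * Complex.exp (θ * Complex.I)))
      ≤ ∫ _θ in (0:ℝ)..(2*Real.pi), M := by
    apply intervalIntegral.integral_mono_on h2π.le hint intervalIntegrable_const
    exact fun θ _ => hle θ
  rw [intervalIntegral.integral_const, smul_eq_mul, sub_zero] at h1
  rw [cAvg]
  calc (2 * Real.pi)⁻¹ * ∫ θ in (0:ℝ)..(2*Real.pi), f (z + (r:ℂ) * Complex.exp (θ * Complex.I))
      ≤ (2 * Real.pi)⁻¹ * (2 * Real.pi * M) := by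
        apply mul_le_mul_of_nonneg_left h1 (by positivity)
    _ = M := by field_simp
theorem circle_eq_of_avg {f : ℂ → ℝ} {z : ℂ} {r M : ℝ}
    (hcont : Continuous (fun θ : ℝ => f (z + (r:ℂ) * Complex.exp (θ * Complex.I))))
    (hle : ∀ θ : ℝ, f (z + (r:ℂ) * Complex.exp (θ * Complex.I)) ≤ M)
    (havg : M ≤ cAvg f z r) :
    ∀ θ : ℝ, f (z + (r:ℂ) * Complex.exp (θ * Complex.I)) = M := by
  set g : ℝ → ℝ := fun θ => f (z + (r:ℂ) * Complex.exp (θ * Complex.I)) with hg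
  have h2π : (0:ℝ) < 2 * Real.pi := by positivity
  have hper : Function.Periodic g (2 * Real.pi) := by
    intro θ
    simp only [hg]
    congr 2
    push_cast
    rw [add_mul, Complex.exp_add, Complex.exp_two_pi_mul_I, mul_one]
  have hint : IntervalIntegrable g MeasureTheory.volume 0 (2*Real.pi) :=
    hcont.intervalIntegrable _ _
  have hIg : 2 * Real.pi * M ≤ ∫ θ in (0:ℝ)..(2*Real.pi), g θ := by
    rw [cAvg] at havg
    have := mul_le_mul_of_nonneg_left havg h2π.le
    calc 2 * Real.pi * M ≤ 2 * Real.pi * ((2 * Real.pi)⁻¹ * ∫ θ in (0:ℝ)..(2*Real.pi), g θ) := this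
      _ = _ := by field_simp
  intro θ₀
  by_contra hne
  have hθ₀ : g θ₀ < M := lt_of_le_of_ne (hle θ₀) hne
  obtain ⟨θ₁, hθ₁mem, hθ₁⟩ := hper.exists_mem_Ico₀ h2π θ₀
  have hh1 : 0 < M - g θ₁ := by rw [← hθ₁]; linarith
  set h : ℝ → ℝ := fun θ => M - g θ with hh
  have hhc : Continuous h := continuous_const.sub hcont
  have hO : IsOpen (h ⁻¹' Ioi 0) := isOpen_Ioi.preimage hhc
  obtain ⟨η, hη, hball⟩ := Metric.isOpen_iff.mp hO θ₁ hh1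
  set m := min (θ₁ + η) (2 * Real.pi) with hm
  have hθ₁m : θ₁ < m := lt_min (by linarith) hθ₁mem.2
  have hsub : Ioo θ₁ m ⊆ Function.support h ∩ Ioc 0 (2 * Real.pi) := by
    intro θ hθ
    constructor
    · have : θ ∈ Metric.ball θ₁ η := by
        rw [Real.ball_eq_Ioo]
        exact ⟨by linarith [hθ.1], lt_of_lt_of_le hθ.2 (min_le_left _ _)⟩
      exact ne_of_gt (hball this)
    · exact ⟨lt_of_le_of_lt hθ₁mem.1 hθ.1, le_trans hθ.2.le (min_le_right _ _)⟩
  have hpos : 0 < ∫ θ in (0:ℝ)..(2*Real.pi), h θ := by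
    rw [intervalIntegral.integral_pos_iff_support_of_nonneg_ae
      (Filter.Eventually.of_forall (fun θ => sub_nonneg.mpr (hle θ)))
      (intervalIntegrable_const.sub hint)]
    refine ⟨h2π, ?_⟩
    calc (0:ENNReal) < MeasureTheory.volume (Ioo θ₁ m) := by
          rw [Real.volume_Ioo]; simp [hθ₁m]
      _ ≤ _ := measure_mono hsub
  rw [intervalIntegral.integral_sub intervalIntegrable_const hint,
    intervalIntegral.integral_const, smul_eq_mul, sub_zero] at hpos
  linarith

theorem circle_mem_closedBall {z : ℂ} {r : ℝ} (hr : 0 ≤ r) (θ : ℝ) :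
    z + (r:ℂ) * Complex.exp (θ * Complex.I) ∈ closedBall z r := by
  simp [Complex.dist_eq, Complex.norm_exp, _root_.abs_of_nonneg hr]

theorem circle_cont {u : ℂ → ℝ} {z : ℂ} {r : ℝ}
    (h : ∀ θ : ℝ, ContinuousAt u (z + (r:ℂ) * Complex.exp (θ * Complex.I))) :
    Continuous (fun θ : ℝ => u (z + (r:ℂ) * Complex.exp (θ * Complex.I))) := by
  rw [continuous_iff_continuousAt]
  intro θ
  exact ContinuousAt.comp (h θ)
    ((by continuity : Continuous (fun θ : ℝ => z + (r:ℂ) * Complex.exp (θ * Complex.I))).continuousAt)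

theorem maxp {G : Set ℂ} (hG : IsOpen G) (hGb : Bornology.IsBounded G) {u : ℂ → ℝ}
    (hc : ContinuousOn u (closure G))
    (hsub : ∀ z ∈ G, ∃ r₀ > 0, ∀ r : ℝ, 0 < r → r ≤ r₀ →
      closedBall z r ⊆ G ∧ u z ≤ cAvg u z r)
    {M : ℝ} (hbd : ∀ p ∈ closure G, p ∉ G → u p ≤ M) :
    ∀ z ∈ closure G, u z ≤ M := by
  rcases eq_empty_or_nonempty G with hGe | hGne
  · subst hGe; simp
  have hK : IsCompact (closure G) := Metric.isCompact_of_isClosed_isBounded isClosed_closure hGb.closure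
  obtain ⟨z₀, hz₀K, hmax⟩ := hK.exists_isMaxOn (hGne.mono subset_closure) hc
  set M' := u z₀ with hM'
  by_cases hz₀G : z₀ ∈ G
  swap
  · exact fun z hz => le_trans (hmax hz) (hbd z₀ hz₀K hz₀G)
  have hcontAt : ∀ x ∈ G, ContinuousAt u x := fun x hx =>
    hc.continuousAt (mem_nhds_iff.mpr ⟨G, subset_closure, hG, hx⟩)
  set S := {z | z ∈ G ∧ u z = M'} with hS
  have hSopen : IsOpen S := by
    rw [Metric.isOpen_iff]
    rintro z ⟨hzG, hzu⟩
    obtain ⟨r₀, hr₀, hr⟩ := hsub z hzG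
    refine ⟨r₀, hr₀, ?_⟩
    intro w hw
    rcases eq_or_ne w z with rfl | hwz
    · exact ⟨hzG, hzu⟩
    set ρ := ‖w - z‖ with hρ
    have hρpos : 0 < ρ := by
      rw [hρ]; exact norm_pos_iff.mpr (sub_ne_zero.mpr hwz)
    have hρlt : ρ ≤ r₀ := by
      rw [mem_ball, Complex.dist_eq] at hw; exact hw.le
    obtain ⟨hballG, hzavg⟩ := hr ρ hρpos hρlt
    have hcont : Continuous (fun θ : ℝ => u (z + (ρ:ℂ) * Complex.exp (θ * Complex.I))) :=
      circle_cont (fun θ => hcontAt _ (hballG (circle_mem_closedBall hρpos.le θ)))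
    have hle : ∀ θ : ℝ, u (z + (ρ:ℂ) * Complex.exp (θ * Complex.I)) ≤ M' :=
      fun θ => hmax (subset_closure (hballG (circle_mem_closedBall hρpos.le θ)))
    have havg : M' ≤ cAvg u z ρ := hzu ▸ hzavg
    have heq := circle_eq_of_avg hcont hle havg (Complex.arg (w - z))
    have hwpt : z + (ρ:ℂ) * Complex.exp ((Complex.arg (w - z)) * Complex.I) = w := by
      rw [hρ]
      rw [show ((‖w - z‖ : ℝ) : ℂ) * Complex.exp ((Complex.arg (w - z)) * Complex.I)
          = w - z from Complex.norm_mul_exp_arg_mul_I (w - z)]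
      ring
    rw [hwpt] at heq
    exact ⟨hballG (by rw [← hwpt]; exact circle_mem_closedBall hρpos.le _), heq⟩
  have hclosSA : closure S ⊆ closure G ∩ u ⁻¹' {M'} := by
    apply closure_minimal
    · exact fun x hx => ⟨subset_closure hx.1, hx.2⟩
    · exact hc.preimage_isClosed_of_isClosed isClosed_closure isClosed_singleton
  by_cases hT : closure S ⊆ G
  · exfalso
    have hSclosed : IsClosed S := by
      apply isClosed_of_closure_subset
      intro p hp
      exact ⟨hT hp, (hclosSA hp).2⟩
    rcases isClopen_iff.mp ⟨hSclosed, hSopen⟩ with h0 | huniv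
    · rw [eq_empty_iff_forall_notMem] at h0
      exact h0 z₀ ⟨hz₀G, rfl⟩
    · obtain ⟨R, hR⟩ := hGb.subset_closedBall 0
      have : ((|R| + 1 : ℝ) : ℂ) ∈ S := huniv ▸ mem_univ _
      have h2 := hR this.1
      rw [mem_closedBall, Complex.dist_eq, sub_zero] at h2
      simp only [Complex.norm_real, Real.norm_eq_abs] at h2
      rw [abs_of_pos (by positivity)] at h2
      linarith [abs_nonneg R, le_abs_self R]
  · rw [not_subset] at hT
    obtain ⟨p, hpS, hpG⟩ := hT
    have hpM : u p = M' := (hclosSA hpS).2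
    have hM'M : M' ≤ M := hpM ▸ hbd p (hclosSA hpS).1 hpG
    exact fun z hz => le_trans (hmax hz) hM'M


theorem density' {θ : ℕ → ℝ} (hdense : Set.Icc (0:ℝ) (2 * Real.pi) ⊆ closure (Set.range θ))
    {φ : ℝ} (hφ : φ ∈ Set.Icc (0:ℝ) (2 * Real.pi)) :
    ∀ ε > 0, ∀ N : ℕ, ∃ j : ℕ, N ≤ j ∧ |θ j - φ| < ε := by
  intro ε hε N
  have h2π : (0:ℝ) < 2 * Real.pi := by positivity
  set a' := max (φ - ε/2) 0 with ha'
  set b' := min (φ + ε/2) (2 * Real.pi) with hb'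
  have ha'b' : a' < b' := by
    rcases lt_or_eq_of_le hφ.2 with h | h
    · exact lt_of_le_of_lt (max_le (by linarith) hφ.1) (lt_min (by linarith) h)
    · have h1 : a' < 2 * Real.pi := max_lt (by linarith) h2π
      have h2 : 2 * Real.pi ≤ b' := le_min (by linarith) le_rfl
      linarith
  have hinf : (Set.Ioo a' b').Infinite := Set.Ioo_infinite ha'b'
  set F : Finset ℝ := (Finset.range N).image θ with hF
  obtain ⟨φ', hφ'mem, hφ'F⟩ := hinf.exists_notMem_finset F
  have hφ'Icc : φ' ∈ Set.Icc (0:ℝ) (2 * Real.pi) :=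
    ⟨le_of_lt (lt_of_le_of_lt (le_max_right _ _) hφ'mem.1),
     le_of_lt (lt_of_lt_of_le hφ'mem.2 (min_le_right _ _))⟩
  have hφ'φ : |φ' - φ| < ε/2 := by
    have h1 : φ - ε/2 ≤ a' := le_max_left _ _
    have h2 : b' ≤ φ + ε/2 := min_le_left _ _
    rw [abs_lt]
    constructor <;> [linarith [hφ'mem.1]; linarith [hφ'mem.2]]
  have hopen : IsOpen ((↑F : Set ℝ)ᶜ) := F.finite_toSet.isClosed.isOpen_compl
  obtain ⟨ρ, hρ, hballF⟩ := Metric.isOpen_iff.mp hopen φ' (by simpa using hφ'F)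
  set ρ' := min ρ (ε/2) with hρ'
  obtain ⟨y, ⟨j, rfl⟩, hy⟩ := Metric.mem_closure_iff.mp (hdense hφ'Icc) ρ' (lt_min hρ (by linarith))
  refine ⟨j, ?_, ?_⟩
  · by_contra hj
    push_neg at hj
    have : θ j ∈ (↑F : Set ℝ)ᶜ := hballF (by
      rw [mem_ball, dist_comm]
      exact lt_of_lt_of_le hy (min_le_left _ _))
    exact this (by
      simp only [hF, Finset.coe_image, Finset.coe_range, mem_image]
      exact ⟨j, by simpa using hj, rfl⟩)
  · have h1 : |θ j - φ'| < ε/2 := by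
      rw [Real.dist_eq, abs_sub_comm] at hy
      exact lt_of_lt_of_le hy (min_le_right _ _)
    calc |θ j - φ| ≤ |θ j - φ'| + |φ' - φ| := abs_sub_le _ _ _
      _ < ε/2 + ε/2 := add_lt_add h1 hφ'φ
      _ = ε := by ring

theorem exp_dist {x y : ℝ} (h : |x - y| ≤ 1) :
    ‖Complex.exp (x * Complex.I) - Complex.exp (y * Complex.I)‖ ≤ 2 * |x - y| := by
  have h1 : Complex.exp (x * Complex.I) - Complex.exp (y * Complex.I)
      = Complex.exp (y * Complex.I) * (Complex.exp ((x - y : ℝ) * Complex.I) - 1) := by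
    rw [mul_sub, mul_one, ← Complex.exp_add]
    push_cast
    ring_nf
  rw [h1, norm_mul]
  have h2 : ‖Complex.exp ((y:ℂ) * Complex.I)‖ = 1 := by
    simp [Complex.norm_exp]
  rw [h2, one_mul]
  have h3 : ‖((x - y : ℝ) : ℂ) * Complex.I‖ = |x - y| := by
    rw [norm_mul, Complex.norm_I, mul_one, Complex.norm_real, Real.norm_eq_abs]
  calc ‖Complex.exp (((x - y : ℝ):ℂ) * Complex.I) - 1‖
      ≤ 2 * ‖((x - y : ℝ):ℂ) * Complex.I‖ :=
        Complex.norm_exp_sub_one_le (by rw [h3]; exact h)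
    _ = 2 * |x - y| := by rw [h3]

theorem exists_angle {p : ℂ} (hp : ‖p‖ = 1) :
    ∃ φ ∈ Set.Icc (0:ℝ) (2 * Real.pi), Complex.exp (φ * Complex.I) = p := by
  have hexp0 : Complex.exp ((Complex.arg p) * Complex.I) = p := by
    have := Complex.norm_mul_exp_arg_mul_I p
    rwa [hp, Complex.ofReal_one, one_mul] at this
  rcases le_or_gt 0 (Complex.arg p) with h | h
  · exact ⟨Complex.arg p, ⟨h, le_trans (Complex.arg_le_pi p) (by linarith [Real.pi_pos])⟩, hexp0⟩
  · refine ⟨Complex.arg p + 2 * Real.pi, ⟨by linarith [Complex.neg_pi_lt_arg p, Real.pi_pos], by linarith⟩, ?_⟩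
    push_cast
    rw [add_mul, Complex.exp_add, Complex.exp_two_pi_mul_I, mul_one, hexp0]

theorem bdry {θ : ℕ → ℝ} (hdense : Set.Icc (0:ℝ) (2 * Real.pi) ⊆ closure (Set.range θ))
    {a : ℕ → ℂ}
    (ha : ∀ j : ℕ, a j = ((1 + ((j : ℝ) + 1)⁻¹ : ℝ) : ℂ) * Complex.exp ((θ j : ℂ) * Complex.I))
    {U : Set ℂ} {R' : ℝ} (hR' : 1 < R') (hR'U : closedBall (0:ℂ) R' ⊆ U)
    {v : ℂ → ℝ} (hcontAt : ∀ x ∈ U, ContinuousAt v x)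
    (hva : ∀ j : ℕ, a j ∈ U → v (a j) = 1) :
    ∀ p : ℂ, ‖p‖ = 1 → v p = 1 := by
  intro p hp
  obtain ⟨φ, hφIcc, hφexp⟩ := exists_angle hp
  have hpU : p ∈ U := hR'U (by rw [mem_closedBall, Complex.dist_eq, sub_zero, hp]; exact hR'.le)
  by_contra hne
  set ε₀ := |v p - 1| with hε₀def
  have hε₀ : 0 < ε₀ := abs_pos.mpr (sub_ne_zero.mpr hne)
  obtain ⟨δ, hδ, hδ'⟩ := Metric.continuousAt_iff.mp (hcontAt p hpU) ε₀ hε₀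
  obtain ⟨N, hN⟩ := exists_nat_one_div_lt (show (0:ℝ) < min (δ/3) (R' - 1) by
    apply lt_min (by linarith) (by linarith))
  set εd := (min (δ/3) 2)/2 with hεd
  obtain ⟨j, hjN, hjφ⟩ := density' hdense hφIcc εd (by positivity) N
  have hj1 : ((j:ℝ) + 1)⁻¹ ≤ ((N:ℝ) + 1)⁻¹ := by
    apply inv_anti₀ (by positivity)
    have := (Nat.cast_le (α := ℝ)).mpr hjN
    linarith
  have hNd : ((N:ℝ) + 1)⁻¹ < min (δ/3) (R' - 1) := by
    rwa [one_div] at hN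
  have habs1 : ‖Complex.exp ((θ j : ℂ) * Complex.I)‖ = 1 := by
    simp [Complex.norm_exp]
  have d1 : ‖a j - Complex.exp ((θ j : ℂ) * Complex.I)‖ = ((j:ℝ) + 1)⁻¹ := by
    have h1 : a j - Complex.exp ((θ j : ℂ) * Complex.I)
        = ((((j:ℝ) + 1)⁻¹ : ℝ) : ℂ) * Complex.exp ((θ j : ℂ) * Complex.I) := by
      rw [ha j]; push_cast; ring
    rw [h1, norm_mul, Complex.norm_real, Real.norm_eq_abs, habs1, mul_one, abs_of_pos (by positivity)]
  have hθ1 : |θ j - φ| ≤ 1 := by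
    have : εd ≤ 1 := by
      rw [hεd]
      have := min_le_right (δ/3) 2
      linarith
    linarith
  have d2 : ‖Complex.exp ((θ j : ℂ) * Complex.I) - p‖ < δ/3 := by
    rw [← hφexp]
    calc ‖Complex.exp ((θ j : ℂ) * Complex.I) - Complex.exp ((φ:ℂ) * Complex.I)‖
        ≤ 2 * |θ j - φ| := exp_dist hθ1
      _ < 2 * εd := by linarith
      _ ≤ δ/3 := by
          rw [hεd]
          have := min_le_left (δ/3) 2
          linarith
  have hdist : dist (a j) p < δ := by
    rw [Complex.dist_eq]
    calc ‖a j - p‖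
        ≤ ‖a j - Complex.exp ((θ j : ℂ) * Complex.I)‖
          + ‖Complex.exp ((θ j : ℂ) * Complex.I) - p‖ := by
          have := norm_add_le (a j - Complex.exp ((θ j : ℂ) * Complex.I))
            (Complex.exp ((θ j : ℂ) * Complex.I) - p)
          simpa using this
      _ < ((j:ℝ) + 1)⁻¹ + δ/3 := by rw [d1]; linarith
      _ ≤ ((N:ℝ) + 1)⁻¹ + δ/3 := by linarith
      _ < δ/3 + δ/3 := by
          have := lt_of_lt_of_le hNd (min_le_left _ _)
          linarith
      _ < δ := by linarith
  have hajU : a j ∈ U := by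
    apply hR'U
    rw [mem_closedBall, Complex.dist_eq, sub_zero, ha j, norm_mul, Complex.norm_real, Real.norm_eq_abs, habs1,
      mul_one, abs_of_pos (by positivity)]
    have := lt_of_lt_of_le hNd (min_le_right _ _)
    linarith
  have := hδ' hdist
  rw [hva j hajU, Real.dist_eq, abs_sub_comm] at this
  exact lt_irrefl _ (hε₀def ▸ this)

theorem eqset_open {U G : Set ℂ} (hGU : G ⊆ U) {u : ℂ → ℝ} {M : ℝ}
    (hcontAt : ∀ x ∈ U, ContinuousAt u x)
    (hsub : ∀ z ∈ G, ∃ r₀ > 0, ∀ r : ℝ, 0 < r → r ≤ r₀ →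
      closedBall z r ⊆ G ∧ u z ≤ cAvg u z r)
    (hle : ∀ z ∈ G, u z ≤ M) :
    IsOpen {z | z ∈ G ∧ u z = M} := by
  rw [Metric.isOpen_iff]
  rintro z ⟨hzG, hzu⟩
  obtain ⟨r₀, hr₀, hr⟩ := hsub z hzG
  refine ⟨r₀, hr₀, ?_⟩
  intro w hw
  rcases eq_or_ne w z with rfl | hwz
  · exact ⟨hzG, hzu⟩
  set ρ := ‖w - z‖ with hρ
  have hρpos : 0 < ρ := norm_pos_iff.mpr (sub_ne_zero.mpr hwz)
  have hρlt : ρ ≤ r₀ := by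
    rw [mem_ball, Complex.dist_eq] at hw; exact hw.le
  obtain ⟨hballG, hzavg⟩ := hr ρ hρpos hρlt
  have hcont : Continuous (fun θ : ℝ => u (z + (ρ:ℂ) * Complex.exp (θ * Complex.I))) :=
    circle_cont (fun θ => hcontAt _ (hGU (hballG (circle_mem_closedBall hρpos.le θ))))
  have hle' : ∀ θ : ℝ, u (z + (ρ:ℂ) * Complex.exp (θ * Complex.I)) ≤ M :=
    fun θ => hle _ (hballG (circle_mem_closedBall hρpos.le θ))
  have havg : M ≤ cAvg u z ρ := by
    calc M = u z := hzu.symm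
      _ ≤ cAvg u z ρ := hzavg
  have heq := circle_eq_of_avg hcont hle' havg (Complex.arg (w - z))
  have hwpt : z + (ρ:ℂ) * Complex.exp ((Complex.arg (w - z)) * Complex.I) = w := by
    rw [hρ]
    rw [show ((‖w - z‖ : ℝ) : ℂ) * Complex.exp ((Complex.arg (w - z)) * Complex.I)
        = w - z from Complex.norm_mul_exp_arg_mul_I (w - z)]
    ring
  rw [hwpt] at heq
  exact ⟨hballG (by rw [← hwpt]; exact circle_mem_closedBall hρpos.le _), heq⟩

theorem stmt_13 (θ : ℕ → ℝ) (hdense : Set.Icc (0:ℝ) (2 * Real.pi) ⊆ closure (Set.range θ))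
    (a : ℕ → ℂ)
    (ha : ∀ j : ℕ, a j = ((1 + ((j : ℝ) + 1)⁻¹ : ℝ) : ℂ) * Complex.exp ((θ j : ℂ) * Complex.I))
    (U : Set ℂ) (hU : IsOpen U) (hDU : closedBall (0:ℂ) 1 ⊆ U)
    (v : ℂ → ℝ) (hv1 : ContDiffOn ℝ 1 v U) (hvsub : SubharmonicOn v U)
    (hva : ∀ j : ℕ, a j ∈ U → v (a j) = 1) :
    ∀ z ∈ closedBall (0:ℂ) 1, v z = 1 := by
  -- a slightly larger closed ball inside U
  obtain ⟨δU, hδUpos, hthick⟩ := (isCompact_closedBall (0:ℂ) 1).exists_thickening_subset_open hU hDU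
  set R' : ℝ := 1 + δU/2 with hR'def
  have hR' : 1 < R' := by rw [hR'def]; linarith
  have hR'U : closedBall (0:ℂ) R' ⊆ U := by
    intro z hz
    apply hthick
    rw [mem_closedBall, Complex.dist_eq, sub_zero] at hz
    rcases le_or_gt (‖z‖) 1 with h1 | h1
    · exact self_subset_thickening hδUpos _ (by rwa [mem_closedBall, Complex.dist_eq, sub_zero])
    · rw [Metric.mem_thickening_iff]
      refine ⟨(((‖z‖)⁻¹ : ℝ) : ℂ) * z, ?_, ?_⟩
      · rw [mem_closedBall, Complex.dist_eq, sub_zero, norm_mul, Complex.norm_real, Real.norm_eq_abs,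
          abs_of_pos (by positivity)]
        rw [inv_mul_cancel₀ (by positivity)]
      · rw [Complex.dist_eq]
        have he : z - (((‖z‖)⁻¹ : ℝ) : ℂ) * z
            = (((1 - (‖z‖)⁻¹ : ℝ)) : ℂ) * z := by push_cast; ring
        rw [he, norm_mul, Complex.norm_real, Real.norm_eq_abs, abs_of_pos (by
          rw [sub_pos]; exact inv_lt_one_of_one_lt₀ h1)]
        have : (1 - (‖z‖)⁻¹) * ‖z‖ = ‖z‖ - 1 := by
          field_simp
        rw [this]
        have hz2 : ‖z‖ ≤ 1 + δU/2 := le_trans hz (le_of_eq hR'def)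
        linarith
  have hvU : ContinuousOn v U := hv1.continuousOn
  have hcontAt : ∀ x ∈ U, ContinuousAt v x := fun x hx => hvU.continuousAt (hU.mem_nhds hx)
  have hbdry : ∀ p : ℂ, ‖p‖ = 1 → v p = 1 := bdry hdense ha hR' hR'U hcontAt hva
  have hball_closure : closure (ball (0:ℂ) 1) = closedBall 0 1 := closure_ball 0 one_ne_zero
  have hsubmean : ∀ z ∈ U, SubmeanAt v U z := hvsub.2
  have hballU : ball (0:ℂ) 1 ⊆ U := fun z hz => hDU (ball_subset_closedBall hz)
  -- submean data on the unit ball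
  have hsubball : ∀ z ∈ ball (0:ℂ) 1, ∃ r₀ > 0, ∀ r : ℝ, 0 < r → r ≤ r₀ →
      closedBall z r ⊆ ball (0:ℂ) 1 ∧ v z ≤ cAvg v z r := by
    intro z hz
    rw [mem_ball, Complex.dist_eq, sub_zero] at hz
    refine ⟨(1 - ‖z‖)/2, by linarith, ?_⟩
    intro r hrpos hrle
    have hcb : closedBall z r ⊆ ball (0:ℂ) 1 := by
      intro x hx
      rw [mem_closedBall, Complex.dist_eq] at hx
      rw [mem_ball, Complex.dist_eq, sub_zero]
      calc ‖x‖ ≤ ‖x - z‖ + ‖z‖ := by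
            have := norm_add_le (x - z) z; simpa using this
        _ ≤ r + ‖z‖ := by linarith
        _ < 1 := by linarith
    exact ⟨hcb, hsubmean z (hballU (by rw [mem_ball, Complex.dist_eq, sub_zero]; exact hz))
      r hrpos (fun x hx => hballU (hcb hx))⟩
  have hv_le_one : ∀ z ∈ closedBall (0:ℂ) 1, v z ≤ 1 := by
    rw [← hball_closure]
    apply maxp isOpen_ball isBounded_ball (hvU.mono (by rw [hball_closure]; exact hDU)) hsubball
    intro p hp hpG
    rw [hball_closure, mem_closedBall, Complex.dist_eq, sub_zero] at hp
    rw [mem_ball, Complex.dist_eq, sub_zero, not_lt] at hpG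
    exact le_of_eq (hbdry p (le_antisymm hp hpG))
  by_cases hP : ∃ z₀ ∈ ball (0:ℂ) 1, v z₀ = 1
  · -- identity: v ≡ 1
    obtain ⟨z₀, hz₀, hvz₀⟩ := hP
    have hSopen := eqset_open hballU hcontAt hsubball
      (fun z hz => hv_le_one z (ball_subset_closedBall hz))
    have hpre : IsPreconnected (ball (0:ℂ) 1) := (convex_ball (0:ℂ) 1).isPreconnected
    have hsubset : ball (0:ℂ) 1 ⊆ {z | z ∈ ball (0:ℂ) 1 ∧ v z = 1} := by
      apply hpre.subset_of_closure_inter_subset hSopen ⟨z₀, hz₀, hz₀, hvz₀⟩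
      intro p ⟨hpc, hpb⟩
      refine ⟨hpb, ?_⟩
      have hA : IsClosed (closedBall (0:ℂ) 1 ∩ v ⁻¹' {1}) :=
        (hvU.mono hDU).preimage_isClosed_of_isClosed Metric.isClosed_closedBall isClosed_singleton
      have : closure {z | z ∈ ball (0:ℂ) 1 ∧ v z = 1} ⊆ closedBall (0:ℂ) 1 ∩ v ⁻¹' {1} :=
        closure_minimal (fun x hx => ⟨ball_subset_closedBall hx.1, hx.2⟩) hA
      exact (this hpc).2
    intro z hz
    rw [mem_closedBall, Complex.dist_eq, sub_zero] at hz
    rcases lt_or_eq_of_le hz with h | h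
    · exact (hsubset (by rw [mem_ball, Complex.dist_eq, sub_zero]; exact h)).2
    · exact hbdry z h
  · -- barrier case: derive a contradiction
    exfalso
    push_neg at hP
    have hvlt : ∀ z ∈ ball (0:ℂ) 1, v z < 1 := fun z hz =>
      lt_of_le_of_ne (hv_le_one z (ball_subset_closedBall hz)) (hP z hz)
    -- max of v on the circle of radius 1/2
    obtain ⟨q₀, hq₀, hq₀max⟩ := (isCompact_sphere (0:ℂ) (1/2)).exists_isMaxOn
      (NormedSpace.sphere_nonempty.mpr (by norm_num))
      (hvU.mono (fun x hx => hDU (sphere_subset_closedBall.trans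
        (closedBall_subset_closedBall (by norm_num)) hx)))
    set M₁ := v q₀ with hM₁def
    have hq₀ball : q₀ ∈ ball (0:ℂ) 1 := by
      rw [mem_sphere_zero_iff_norm] at hq₀
      rw [mem_ball, dist_zero_right, hq₀]; norm_num
    have hM₁ : M₁ < 1 := hvlt q₀ hq₀ball
    have hlog2 : 0 < Real.log 2 := Real.log_pos one_lt_two
    set ε := (1 - M₁) / Real.log 2 with hεdef
    have hε : 0 < ε := div_pos (by linarith) hlog2
    set w : ℂ → ℝ := fun ζ => -Real.log (‖ζ‖) with hwdef
    set uB : ℂ → ℝ := fun ζ => v ζ + ε * w ζ with huBdef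
    set G := ball (0:ℂ) 1 ∩ (closedBall (0:ℂ) (1/2))ᶜ with hGdef
    have hGopen : IsOpen G := isOpen_ball.inter Metric.isClosed_closedBall.isOpen_compl
    have hGb : Bornology.IsBounded G := isBounded_ball.subset inter_subset_left
    have hGmem : ∀ z ∈ G, 1/2 < ‖z‖ ∧ ‖z‖ < 1 := by
      rintro z ⟨h1, h2⟩
      rw [mem_ball, Complex.dist_eq, sub_zero] at h1
      rw [mem_compl_iff, mem_closedBall, Complex.dist_eq, sub_zero, not_le] at h2
      exact ⟨h2, h1⟩
    have hGsubU : G ⊆ U := fun z hz => hballU hz.1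
    have hclosG : ∀ p ∈ closure G, 1/2 ≤ ‖p‖ ∧ ‖p‖ ≤ 1 := by
      intro p hp
      have h1 := closure_inter_subset_inter_closure _ _ hp
      rw [hball_closure] at h1
      have h2 : closure ((closedBall (0:ℂ) (1/2))ᶜ) ⊆ (ball (0:ℂ) (1/2))ᶜ :=
        closure_minimal (compl_subset_compl.mpr ball_subset_closedBall)
          isOpen_ball.isClosed_compl
      have h3 := h2 h1.2
      rw [mem_compl_iff, mem_ball, Complex.dist_eq, sub_zero, not_lt] at h3
      have h4 := h1.1
      rw [mem_closedBall, Complex.dist_eq, sub_zero] at h4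
      exact ⟨h3, h4⟩
    have hwcontAt : ∀ x : ℂ, x ≠ 0 → ContinuousAt w x := by
      intro x hx
      exact ((Real.continuousAt_log (norm_ne_zero_iff.mpr hx)).comp
        continuous_norm.continuousAt).neg
    have hucontAt : ∀ x, x ∈ U → x ≠ 0 → ContinuousAt uB x := by
      intro x hxU hx0
      exact (hcontAt x hxU).add (((hwcontAt x hx0)).const_mul ε)
    have hcu : ContinuousOn uB (closure G) := by
      intro p hp
      have hb := hclosG p hp
      have hpU : p ∈ U := hDU (by rw [mem_closedBall, Complex.dist_eq, sub_zero]; exact hb.2)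
      have hp0 : p ≠ 0 := by
        intro h; rw [h, norm_zero] at hb; linarith [hb.1]
      exact (hucontAt p hpU hp0).continuousWithinAt
    have hsubG : ∀ z ∈ G, ∃ r₀ > 0, ∀ r : ℝ, 0 < r → r ≤ r₀ →
        closedBall z r ⊆ G ∧ uB z ≤ cAvg uB z r := by
      intro z hz
      obtain ⟨hs1, hs2⟩ := hGmem z hz
      set s := ‖z‖ with hsdef
      refine ⟨min ((1 - s)/2) ((s - 1/2)/2), lt_min (by linarith) (by linarith), ?_⟩
      intro r hrpos hrle
      have hrle1 : r ≤ (1 - s)/2 := le_trans hrle (min_le_left _ _)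
      have hrle2 : r ≤ (s - 1/2)/2 := le_trans hrle (min_le_right _ _)
      have hrs : r < s := by linarith
      have hcbG : closedBall z r ⊆ G := by
        intro x hx
        rw [mem_closedBall, Complex.dist_eq] at hx
        have hxu : ‖x‖ ≤ ‖x - z‖ + ‖z‖ := by
          have := norm_add_le (x - z) z; simpa using this
        have hxl : ‖z‖ ≤ ‖x - z‖ + ‖x‖ := by
          have := norm_add_le (z - x) x
          simp only [sub_add_cancel] at this
          rw [norm_sub_rev] at this
          linarith
        constructor
        · rw [mem_ball, Complex.dist_eq, sub_zero]; linarith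
        · rw [mem_compl_iff, mem_closedBall, Complex.dist_eq, sub_zero, not_le]; linarith
      have hcbU : closedBall z r ⊆ U := fun x hx => hGsubU (hcbG hx)
      have hcv : Continuous (fun θ : ℝ => v (z + (r:ℂ) * Complex.exp (θ * Complex.I))) :=
        circle_cont (fun θ => hcontAt _ (hcbU (circle_mem_closedBall hrpos.le θ)))
      have hcw : Continuous (fun θ : ℝ => w (z + (r:ℂ) * Complex.exp (θ * Complex.I))) := by
        apply circle_cont
        intro θ₁
        apply hwcontAt
        intro h0
        have := hGmem _ (hcbG (circle_mem_closedBall hrpos.le θ₁))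
        rw [h0, norm_zero] at this; linarith [this.1]
      have hintv := hcv.intervalIntegrable (μ := MeasureTheory.volume) 0 (2*Real.pi)
      have hintw := hcw.intervalIntegrable (μ := MeasureTheory.volume) 0 (2*Real.pi)
      have havg_split : cAvg uB z r = cAvg v z r + ε * cAvg w z r := by
        simp only [cAvg, huBdef]
        rw [intervalIntegral.integral_add hintv (hintw.const_mul ε),
          intervalIntegral.integral_const_mul]
        ring
      have havgw : cAvg w z r = w z := by
        simp only [cAvg, hwdef]
        rw [intervalIntegral.integral_neg, log_mvp hrpos hrs]
        have h2π : (2 * Real.pi) ≠ 0 := by positivity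
        field_simp
      have hvavg : v z ≤ cAvg v z r := hsubmean z (hGsubU hz) r hrpos hcbU
      refine ⟨hcbG, ?_⟩
      calc uB z = v z + ε * w z := rfl
        _ ≤ cAvg v z r + ε * w z := by linarith
        _ = cAvg v z r + ε * cAvg w z r := by rw [havgw]
        _ = cAvg uB z r := havg_split.symm
    have hbdu : ∀ p ∈ closure G, p ∉ G → uB p ≤ 1 := by
      intro p hp hpG
      obtain ⟨hb1, hb2⟩ := hclosG p hp
      have hpcb : p ∈ closedBall (0:ℂ) 1 := by
        rw [mem_closedBall, Complex.dist_eq, sub_zero]; exact hb2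
      have hcase : ‖p‖ = 1 ∨ ‖p‖ = 1/2 := by
        rw [hGdef, mem_inter_iff, not_and_or] at hpG
        rcases hpG with h | h
        · rw [mem_ball, Complex.dist_eq, sub_zero, not_lt] at h
          exact Or.inl (le_antisymm hb2 h)
        · rw [mem_compl_iff, not_not, mem_closedBall, Complex.dist_eq, sub_zero] at h
          exact Or.inr (le_antisymm h hb1)
      rcases hcase with h | h
      · have hw0 : w p = 0 := by
          simp only [hwdef, h, Real.log_one, neg_zero]
        calc uB p = v p + ε * w p := rfl
          _ = v p := by rw [hw0]; ring
          _ ≤ 1 := hv_le_one p hpcb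
      · have hvM : v p ≤ M₁ := hq₀max (by
          rw [mem_sphere_iff_norm, sub_zero]; exact h)
        have hwp : w p = Real.log 2 := by
          simp only [hwdef, h, one_div, Real.log_inv, neg_neg]
        calc uB p = v p + ε * w p := rfl
          _ ≤ M₁ + ε * Real.log 2 := by rw [hwp]; linarith
          _ = 1 := by rw [hεdef, div_mul_cancel₀ _ hlog2.ne']; ring
    have hmaxu := maxp hGopen hGb hcu hsubG hbdu
    have hline : ∀ t : ℝ, 1/2 < t → t < 1 → v ((t:ℂ)) - ε * Real.log t ≤ 1 := by
      intro t ht1 ht2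
      have htG : (t:ℂ) ∈ G := by
        constructor
        · rw [mem_ball, Complex.dist_eq, sub_zero, Complex.norm_real, Real.norm_eq_abs,
            abs_of_pos (by linarith)]; exact ht2
        · rw [mem_compl_iff, mem_closedBall, Complex.dist_eq, sub_zero, Complex.norm_real, Real.norm_eq_abs,
            abs_of_pos (by linarith), not_le]; exact ht1
      have := hmaxu _ (subset_closure htG)
      have habs : ‖((t:ℝ):ℂ)‖ = t := by
        rw [Complex.norm_real, Real.norm_eq_abs, abs_of_pos (by linarith)]
      calc v ((t:ℝ):ℂ) - ε * Real.log t
          = v ((t:ℝ):ℂ) + ε * (-Real.log (‖((t:ℝ):ℂ)‖)) := by rw [habs]; ring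
        _ = uB ((t:ℝ):ℂ) := rfl
        _ ≤ 1 := this
    -- differentiability facts
    have hvdiff : ∀ x ∈ U, DifferentiableAt ℝ v x := fun x hx =>
      ((hv1.differentiableOn one_ne_zero) x hx).differentiableAt (hU.mem_nhds hx)
    have hg : ∀ (q : ℂ) (t : ℝ), ((t:ℂ) * q) ∈ U →
        HasDerivAt (fun s : ℝ => v ((s:ℂ) * q)) ((fderiv ℝ v ((t:ℂ) * q)) q) t := by
      intro q t hmem
      have hfun : (fun s : ℝ => (s:ℂ) * q) = (fun s : ℝ => s • q) := by
        funext s; rw [Complex.real_smul]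
      have hL : HasDerivAt (fun s : ℝ => (s:ℂ) * q) q t := by
        rw [hfun]
        have h1 := (hasDerivAt_id t).smul_const q
        simpa using h1
      have hfd := (hvdiff _ hmem).hasFDerivAt
      exact hfd.comp_hasDerivAt t hL
    have h1U : (1:ℂ) ∈ U := hDU (by simp)
    set D := (fderiv ℝ v 1) (1:ℂ) with hDdef
    have hgt1 : HasDerivAt (fun s : ℝ => v ((s:ℂ))) D 1 := by
      have := hg 1 1 (by rwa [mul_one])
      simp only [mul_one] at this
      exact this
    have hh : HasDerivAt (fun t : ℝ => v ((t:ℂ)) - ε * Real.log t) (D - ε) 1 := by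
      have hlog := (Real.hasDerivAt_log one_ne_zero).const_mul ε
      simp only [inv_one, mul_one] at hlog
      exact hgt1.sub hlog
    have hB : ε ≤ D := by
      have hslope := hasDerivAt_iff_tendsto_slope.mp hh
      have hmono : nhdsWithin (1:ℝ) (Iio 1) ≤ nhdsWithin (1:ℝ) {(1:ℝ)}ᶜ :=
        nhdsWithin_mono _ (fun x hx => ne_of_lt hx)
      have h0 : (0:ℝ) ≤ D - ε := by
        apply ge_of_tendsto (hslope.mono_left hmono)
        filter_upwards [Ioo_mem_nhdsLT_of_mem
          (⟨by norm_num, le_refl (1:ℝ)⟩ : (1:ℝ) ∈ Ioc (1/2 : ℝ) 1)] with t ht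
        rw [slope_def_field]
        have h1v : v (((1:ℝ)):ℂ) = 1 := by
          apply hbdry; simp
        have hht := hline t ht.1 ht.2
        apply div_nonneg_of_nonpos
        · rw [h1v, Real.log_one]
          simp only [mul_zero, sub_zero]
          linarith
        · linarith [ht.2]
      linarith
    -- now show D < ε using Rolle along rays through the aⱼ
    have hfderivCont : ContinuousOn (fderiv ℝ v) U :=
      hv1.continuousOn_fderiv_of_isOpen hU le_rfl
    have hcAt1 : ContinuousAt (fderiv ℝ v) 1 := hfderivCont.continuousAt (hU.mem_nhds h1U)
    obtain ⟨δ₁, hδ₁pos, hδ₁⟩ := Metric.continuousAt_iff.mp hcAt1 (ε/4) (by positivity)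
    set C := ‖fderiv ℝ v 1‖ with hCdef
    obtain ⟨N, hN⟩ := exists_nat_one_div_lt (show (0:ℝ) < min (δ₁/2) (R' - 1) from
      lt_min (by positivity) (by linarith))
    have hNd : ((N:ℝ) + 1)⁻¹ < min (δ₁/2) (R' - 1) := by rwa [one_div] at hN
    set εZ := min 1 (min (δ₁/8) (ε/(8*(C+1)))) with hεZdef
    have hεZpos : 0 < εZ := by
      apply lt_min one_pos
      apply lt_min (by positivity)
      have hC1 : (0:ℝ) < C + 1 := by positivity
      positivity
    have h0Icc : (0:ℝ) ∈ Set.Icc (0:ℝ) (2*Real.pi) := ⟨le_refl 0, by positivity⟩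
    obtain ⟨j, hjN, hjθ⟩ := density' hdense h0Icc εZ hεZpos N
    rw [sub_zero] at hjθ
    set q : ℂ := Complex.exp ((θ j : ℂ) * Complex.I) with hqdef
    set sj : ℝ := 1 + ((j:ℝ) + 1)⁻¹ with hsjdef
    have hsj1 : 1 < sj := by
      rw [hsjdef]; have : (0:ℝ) < ((j:ℝ)+1)⁻¹ := by positivity
      linarith
    have hj1 : ((j:ℝ) + 1)⁻¹ ≤ ((N:ℝ) + 1)⁻¹ := by
      apply inv_anti₀ (by positivity)
      have := (Nat.cast_le (α := ℝ)).mpr hjN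
      linarith
    have habsq : ‖q‖ = 1 := by
      rw [hqdef]; simp [Complex.norm_exp]
    have hsjR : sj ≤ R' := by
      have h1 := lt_of_lt_of_le hNd (min_le_right _ _)
      rw [hsjdef]; linarith
    have htU : ∀ t : ℝ, t ∈ Set.Icc 1 sj → ((t:ℂ) * q) ∈ U := by
      intro t ht
      apply hR'U
      rw [mem_closedBall, Complex.dist_eq, sub_zero, norm_mul, habsq, mul_one,
        Complex.norm_real, Real.norm_eq_abs, abs_of_pos (by linarith [ht.1])]
      exact le_trans ht.2 hsjR
    have hend1 : v (((1:ℝ):ℂ) * q) = 1 := by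
      rw [Complex.ofReal_one, one_mul]; exact hbdry q habsq
    have hendsj : v (((sj:ℝ):ℂ) * q) = 1 := by
      have haj : a j = ((sj:ℝ):ℂ) * q := by
        rw [ha j, hqdef, hsjdef]
      rw [← haj]
      apply hva
      rw [haj]
      exact htU sj ⟨hsj1.le, le_refl _⟩
    have hcontIcc : ContinuousOn (fun t : ℝ => v ((t:ℂ) * q)) (Set.Icc 1 sj) := by
      apply hvU.comp
      · exact (Complex.continuous_ofReal.mul continuous_const).continuousOn
      · exact fun t ht => htU t ht
    obtain ⟨ξ, hξmem, hξ0⟩ := exists_hasDerivAt_eq_zero hsj1 hcontIcc (hend1.trans hendsj.symm)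
      (fun t ht => hg q t (htU t ⟨ht.1.le, ht.2.le⟩))
    set x : ℂ := ((ξ:ℝ):ℂ) * q with hxdef
    have hq1 : ‖q - 1‖ ≤ 2 * |θ j| := by
      have h1 : Complex.exp ((0:ℝ) * Complex.I) = 1 := by simp
      have hθ1 : |θ j - 0| ≤ 1 := by
        rw [sub_zero]
        have h1' : εZ ≤ 1 := min_le_left _ _
        linarith
      have := exp_dist hθ1
      rw [sub_zero] at this
      rw [hqdef]
      calc ‖Complex.exp ((θ j : ℂ) * Complex.I) - 1‖
          = ‖Complex.exp ((θ j : ℂ) * Complex.I) - Complex.exp ((0:ℝ) * Complex.I)‖ := by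
            rw [h1]
        _ ≤ 2 * |θ j| := this
    have hεZ1 : εZ ≤ δ₁/8 := le_trans (min_le_right _ _) (min_le_left _ _)
    have hεZ2 : εZ ≤ ε/(8*(C+1)) := le_trans (min_le_right _ _) (min_le_right _ _)
    have hdistx : dist x 1 < δ₁ := by
      rw [Complex.dist_eq]
      have hxmq : ‖x - q‖ ≤ ((N:ℝ)+1)⁻¹ := by
        have he : x - q = (((ξ - 1 : ℝ)):ℂ) * q := by rw [hxdef]; push_cast; ring
        rw [he, norm_mul, habsq, mul_one, Complex.norm_real, Real.norm_eq_abs,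
          abs_of_pos (by linarith [hξmem.1])]
        have : ξ ≤ sj := hξmem.2.le
        rw [hsjdef] at this
        linarith
      have hδhalf := lt_of_lt_of_le hNd (min_le_left _ _)
      calc ‖x - 1‖ ≤ ‖x - q‖ + ‖q - 1‖ := by
            have := norm_add_le (x - q) (q - 1); simpa using this
        _ ≤ ((N:ℝ)+1)⁻¹ + 2 * |θ j| := by linarith [hq1]
        _ < δ₁/2 + 2 * (δ₁/8) := by
            apply add_lt_add hδhalf
            have : |θ j| < δ₁/8 := lt_of_lt_of_le hjθ hεZ1
            linarith
        _ < δ₁ := by linarith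
    have hnear := hδ₁ hdistx
    rw [dist_eq_norm, norm_sub_rev] at hnear
    have hξ0' : (fderiv ℝ v x) q = 0 := hξ0
    have hqnorm : ‖q‖ = 1 := by rw [habsq]
    have hsplit : D = (fderiv ℝ v 1) (1 - q) + ((fderiv ℝ v 1) - (fderiv ℝ v x)) q := by
      rw [map_sub, ContinuousLinearMap.sub_apply, hξ0']
      ring
    have hDabs : |D| < ε := by
      rw [hsplit]
      have hb1 : |(fderiv ℝ v 1) (1 - q)| ≤ C * ‖1 - q‖ := by
        have := (fderiv ℝ v 1).le_opNorm (1 - q)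
        rwa [Real.norm_eq_abs] at this
      have hb2 : |((fderiv ℝ v 1) - (fderiv ℝ v x)) q| ≤ ‖(fderiv ℝ v 1) - (fderiv ℝ v x)‖ := by
        have := ((fderiv ℝ v 1) - (fderiv ℝ v x)).le_opNorm q
        rwa [Real.norm_eq_abs, hqnorm, mul_one] at this
      have h1q : ‖1 - q‖ ≤ 2 * |θ j| := by
        rw [norm_sub_rev]
        exact hq1
      have hCnn : (0:ℝ) ≤ C := norm_nonneg _
      have hstep : C * ‖1 - q‖ ≤ ε/4 := by
        have h2 : ‖1 - q‖ ≤ 2 * (ε/(8*(C+1))) := by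
          have : |θ j| < ε/(8*(C+1)) := lt_of_lt_of_le hjθ hεZ2
          linarith
        calc C * ‖1 - q‖ ≤ C * (2 * (ε/(8*(C+1)))) :=
              mul_le_mul_of_nonneg_left h2 hCnn
          _ ≤ (C+1) * (2 * (ε/(8*(C+1)))) := by
              apply mul_le_mul_of_nonneg_right (by linarith)
              positivity
          _ = ε/4 := by field_simp; ring
      calc |(fderiv ℝ v 1) (1 - q) + ((fderiv ℝ v 1) - (fderiv ℝ v x)) q|
          ≤ |(fderiv ℝ v 1) (1 - q)| + |((fderiv ℝ v 1) - (fderiv ℝ v x)) q| := abs_add_le _ _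
        _ ≤ C * ‖1 - q‖ + ‖(fderiv ℝ v 1) - (fderiv ℝ v x)‖ := by
            linarith [hb1, hb2]
        _ < ε/4 + ε/4 := by
            apply add_lt_add_of_le_of_lt hstep hnear
        _ < ε := by linarith
    have : D < ε := lt_of_le_of_lt (le_abs_self D) hDabs
    linarith
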